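/- Let m and k be integers with k ≥ 1 and m > k+1. Then S_{m,k+1}(0) = m · ((m+k-1)(m+k-3)⋯(m-k+1)) / ((m+k)(m+k-2)⋯(m-k)), where the numerator product is ∏_{j=1}^{k} (m+k+1-2j) and the denominator product is ∏_{j=0}^{k} (m+k-2j). -/

import Mathlib

open Polynomial Finset

/-- The odd double factorial `(2k-1)!! = 1·3·5⋯(2k-1)`. -/
noncomputable def oddDoubleFac (k : ℕ) : ℝ := ∏ j ∈ Finset.range k, (2 * (j : ℝ) + 1)

/-- The even double factorial `(2k)!! = 2·4⋯(2k)`. -/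
noncomputable def evenDoubleFac (k : ℕ) : ℝ := ∏ j ∈ Finset.range k, (2 * (j : ℝ) + 2)

/-- `S_{n,k}(x) = 1 + Σ_{m=1}^{k-1} ((2m-1)!!/(2m)!!) (k-m)_{2m} (1-x²)^{-m} ∏_{j=1}^m (n²-j²)⁻¹`. -/
noncomputable def S (n k : ℕ) (x : ℝ) : ℝ :=
  1 + ∑ m ∈ Finset.Icc 1 (k - 1),
    (oddDoubleFac m / evenDoubleFac m) *
      ((ascPochhammer ℝ (2 * m)).eval ((k : ℝ) - (m : ℝ))) *
      ((1 - x ^ 2) ^ m)⁻¹ *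
      ∏ j ∈ Finset.Icc 1 m, ((n : ℝ) ^ 2 - (j : ℝ) ^ 2)⁻¹

namespace Stmt8Aux

/-- The coefficient `((2r-1)!!/(2r)!!) (K+1-r)_{2r}`. -/
noncomputable def cR (K : ℝ) (r : ℕ) : ℝ :=
  (oddDoubleFac r / evenDoubleFac r) * (ascPochhammer ℝ (2 * r)).eval (K + 1 - (r : ℝ))

/-- `p m r = ∏_{j=1}^r (m² - j²)`. -/
noncomputable def p (m r : ℕ) : ℝ := ∏ j ∈ Finset.Icc 1 r, ((m : ℝ) ^ 2 - (j : ℝ) ^ 2)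

lemma evenDoubleFac_pos (r : ℕ) : 0 < evenDoubleFac r :=
  Finset.prod_pos (fun j _ => by positivity)

lemma oddDoubleFac_pos (r : ℕ) : 0 < oddDoubleFac r :=
  Finset.prod_pos (fun j _ => by positivity)

lemma cR_zero (K : ℝ) : cR K 0 = 1 := by
  simp [cR, oddDoubleFac, evenDoubleFac]

lemma ascPochhammer_eval_succ_left (n : ℕ) (t : ℝ) :
    (ascPochhammer ℝ (n + 1)).eval t = t * (ascPochhammer ℝ n).eval (t + 1) := by
  rw [ascPochhammer_succ_left]
  simp [eval_comp]

/-- contiguous relation: `y(y+1)·(y+2)_n = (y)_n (y+n)(y+n+1)`. -/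
lemma poch_shift (n : ℕ) (y : ℝ) :
    y * (y + 1) * (ascPochhammer ℝ n).eval (y + 2) =
      (ascPochhammer ℝ n).eval y * ((y + n) * (y + n + 1)) := by
  have h1 : (ascPochhammer ℝ (n + 2)).eval y
      = y * ((y + 1) * (ascPochhammer ℝ n).eval (y + 2)) := by
    rw [show n + 2 = (n + 1) + 1 from rfl, ascPochhammer_eval_succ_left,
      ascPochhammer_eval_succ_left]
    rw [show y + 1 + 1 = y + 2 by ring]
  have h2 : (ascPochhammer ℝ (n + 2)).eval y
      = (ascPochhammer ℝ n).eval y * (y + n) * (y + (n + 1)) := by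
    rw [show n + 2 = (n + 1) + 1 from rfl, ascPochhammer_succ_eval,
      ascPochhammer_succ_eval]
    push_cast
    ring
  rw [h1] at h2
  linear_combination h2

lemma cR_succ (K : ℝ) (r : ℕ) :
    (2 * (r : ℝ) + 2) * cR K (r + 1)
      = (2 * (r : ℝ) + 1) * ((K - r) * (K + 1 + r)) * cR K r := by
  unfold cR
  rw [show 2 * (r + 1) = (2 * r + 1) + 1 from by ring, ascPochhammer_eval_succ_left,
    ascPochhammer_succ_eval]
  rw [show oddDoubleFac (r + 1) = oddDoubleFac r * (2 * (r : ℝ) + 1) from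
    Finset.prod_range_succ _ _]
  rw [show evenDoubleFac (r + 1) = evenDoubleFac r * (2 * (r : ℝ) + 2) from
    Finset.prod_range_succ _ _]
  rw [show K + 1 - ((r : ℕ) + 1 : ℕ) + 1 = K + 1 - (r : ℝ) from by push_cast; ring]
  have h1 : evenDoubleFac r ≠ 0 := ne_of_gt (evenDoubleFac_pos r)
  have h2 : (2 * (r : ℝ) + 2) ≠ 0 := by positivity
  field_simp
  push_cast
  ring

lemma cR_constraint (K : ℝ) (r : ℕ) :
    (K + 1 - r) * (K + 2 - r) * cR (K + 2) r = (K + 1 + r) * (K + 2 + r) * cR K r := by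
  unfold cR
  have h := poch_shift (2 * r) (K + 1 - (r : ℝ))
  rw [show K + 1 - (r : ℝ) + 2 = K + 2 + 1 - (r : ℝ) from by ring] at h
  push_cast at h
  linear_combination (oddDoubleFac r / evenDoubleFac r) * h

lemma cR_star (K : ℝ) (r : ℕ) :
    cR (K + 2) (r + 1) - cR K (r + 1)
      = ((K + 2) ^ 2 - (r : ℝ) ^ 2) * cR (K + 2) r - ((K + 1) ^ 2 - (r : ℝ) ^ 2) * cR K r := by
  have h2 : (2 * (r : ℝ) + 2) ≠ 0 := by positivity
  apply mul_left_cancel₀ h2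
  linear_combination cR_succ (K + 2) r - cR_succ K r - cR_constraint K r

lemma cR_nat_zero_of_lt {k r : ℕ} (h : k < r) : cR (k : ℝ) r = 0 := by
  have h2 : r - (k + 1) < 2 * r := by omega
  have hz := ascPochhammer_eval_neg_coe_nat_of_lt (R := ℝ) h2
  have e : -((r - (k + 1) : ℕ) : ℝ) = (k : ℝ) + 1 - (r : ℝ) := by
    have : ((r - (k + 1) : ℕ) : ℝ) = (r : ℝ) - ((k : ℝ) + 1) := by
      push_cast [Nat.cast_sub (by omega : k + 1 ≤ r)]
      ring
    rw [this]; ring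
  rw [e] at hz
  unfold cR
  rw [hz, mul_zero]

lemma p_zero (m : ℕ) : p m 0 = 1 := by simp [p]

lemma p_succ (m r : ℕ) : p m (r + 1) = p m r * ((m : ℝ) ^ 2 - ((r : ℝ) + 1) ^ 2) := by
  unfold p
  rw [Finset.prod_Icc_succ_top (by omega : 1 ≤ r + 1)]
  push_cast
  ring

lemma p_ne_zero {m r : ℕ} (h : r < m) : p m r ≠ 0 := by
  unfold p
  rw [Finset.prod_ne_zero_iff]
  intro j hj
  have hjm : j < m := by
    simp only [Finset.mem_Icc] at hj
    omega
  have h1 : (j : ℝ) < (m : ℝ) := by exact_mod_cast hjm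
  have h2 : (0 : ℝ) ≤ (j : ℝ) := Nat.cast_nonneg j
  have : (j : ℝ) ^ 2 < (m : ℝ) ^ 2 := by nlinarith
  intro hc
  nlinarith

/-- The key two-step recurrence for the sums, via telescoping. -/
lemma sum_rec (m k : ℕ) (hm : k + 2 < m) :
    ((m : ℝ) ^ 2 - ((k : ℝ) + 2) ^ 2) *
        (∑ r ∈ Finset.range (k + 3), cR ((k : ℝ) + 2) r * (p m r)⁻¹)
      = ((m : ℝ) ^ 2 - ((k : ℝ) + 1) ^ 2) *
        (∑ r ∈ Finset.range (k + 1), cR (k : ℝ) r * (p m r)⁻¹) := by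
  have hext : ∑ r ∈ Finset.range (k + 3), cR (k : ℝ) r * (p m r)⁻¹
      = ∑ r ∈ Finset.range (k + 1), cR (k : ℝ) r * (p m r)⁻¹ := by
    rw [Finset.sum_range_succ, Finset.sum_range_succ,
      cR_nat_zero_of_lt (by omega), cR_nat_zero_of_lt (by omega)]
    ring
  rw [← hext, Finset.mul_sum, Finset.mul_sum, ← sub_eq_zero, ← Finset.sum_sub_distrib]
  have hcast : ((k : ℝ) + 2) = (((k + 2 : ℕ) : ℕ) : ℝ) := by push_cast; ring
  have key : ∀ r ∈ Finset.range (k + 3),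
      ((m : ℝ) ^ 2 - ((k : ℝ) + 2) ^ 2) * (cR ((k : ℝ) + 2) r * (p m r)⁻¹)
        - ((m : ℝ) ^ 2 - ((k : ℝ) + 1) ^ 2) * (cR (k : ℝ) r * (p m r)⁻¹)
      = (fun r => (cR ((k : ℝ) + 2) r - cR (k : ℝ) r) * (p m (r - 1))⁻¹) r
        - (fun r => (cR ((k : ℝ) + 2) r - cR (k : ℝ) r) * (p m (r - 1))⁻¹) (r + 1) := by
    intro r hr
    have hr' : r ≤ k + 2 := by
      simp only [Finset.mem_range] at hr; omega
    simp only [Nat.add_sub_cancel]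
    have hstar := cR_star (k : ℝ) r
    match r with
    | 0 =>
      have h0 := cR_star (k : ℝ) 0
      simp only [cR_zero, Nat.cast_zero] at h0
      simp only [Nat.zero_sub, cR_zero, p_zero, inv_one, mul_one, sub_self, zero_mul,
        Nat.zero_add]
      norm_num at h0 ⊢
      linarith [h0]
    | Nat.succ s =>
      have hp : p m (s + 1) = p m s * ((m : ℝ) ^ 2 - ((s : ℝ) + 1) ^ 2) := p_succ m s
      have hps : p m s ≠ 0 := p_ne_zero (by omega)
      have hfac : (m : ℝ) ^ 2 - ((s : ℝ) + 1) ^ 2 ≠ 0 := by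
        have h1 : ((s : ℝ) + 1) < (m : ℝ) := by
          have : (s + 1 : ℕ) < m := by omega
          exact_mod_cast this
        have h2 : (0 : ℝ) ≤ (s : ℝ) + 1 := by positivity
        intro hc
        nlinarith
      simp only [Nat.succ_sub_one]
      have hstar1 := cR_star (k : ℝ) (s + 1)
      rw [hstar1, hp]
      push_cast
      field_simp
      ring
  rw [Finset.sum_congr rfl key, Finset.sum_range_sub']
  have hz1 : cR ((k : ℝ)) (k + 3) = 0 := cR_nat_zero_of_lt (by omega)
  have hz2 : cR ((k : ℝ) + 2) (k + 3) = 0 := by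
    rw [show (k : ℝ) + 2 = ((k + 2 : ℕ) : ℝ) from by push_cast; ring]
    exact cR_nat_zero_of_lt (by omega)
  rw [hz1, hz2, cR_zero, cR_zero]
  ring

lemma Icc_prod_to_range (n : ℕ) (f : ℕ → ℝ) :
    ∏ j ∈ Finset.Icc 1 n, f j = ∏ i ∈ Finset.range n, f (i + 1) := by
  rw [← Finset.Ico_add_one_right_eq_Icc, Finset.prod_Ico_eq_prod_range]
  exact Finset.prod_congr rfl (fun i _ => by rw [Nat.add_comm])

/-- The main identity, by strong induction. -/
lemma main (m : ℕ) : ∀ k : ℕ, k + 1 < m →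
    ∑ r ∈ Finset.range (k + 1), cR (k : ℝ) r * (p m r)⁻¹
      = (m : ℝ) * (∏ j ∈ Finset.Icc 1 k, ((m : ℝ) + (k : ℝ) + 1 - 2 * (j : ℝ))) /
        (∏ j ∈ Finset.range (k + 1), ((m : ℝ) + (k : ℝ) - 2 * (j : ℝ))) := by
  intro k
  induction k using Nat.strong_induction_on with
  | _ k ih =>
    match k with
    | 0 =>
      intro hm
      have hm0 : (m : ℝ) ≠ 0 := by
        have : 0 < m := by omega
        positivity
      rw [Finset.sum_range_one, cR_zero, p_zero]
      rw [show Finset.Icc 1 0 = (∅ : Finset ℕ) from rfl, Finset.prod_empty,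
        Finset.prod_range_one]
      rw [one_mul, inv_one, Nat.cast_zero]
      rw [mul_one]
      show (1:ℝ) = (m:ℝ) / ((m:ℝ) + 0 - 2*0)
      norm_num [hm0]
    | 1 =>
      intro hm
      have hM : (3 : ℝ) ≤ (m : ℝ) := by exact_mod_cast (by omega : 3 ≤ m)
      have c11 : cR ((1 : ℕ) : ℝ) 1 = 1 := by
        unfold cR
        rw [show 2 * 1 = 1 + 1 from rfl, ascPochhammer_succ_eval, ascPochhammer_one]
        simp [oddDoubleFac, evenDoubleFac]
        norm_num
      rw [Finset.sum_range_succ, Finset.sum_range_one, cR_zero, p_zero, c11]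
      have hp1 : p m 1 = (m : ℝ) ^ 2 - 1 := by
        unfold p
        simp
      rw [hp1]
      rw [show Finset.Icc 1 1 = {1} from rfl]
      rw [show Finset.range 2 = {0, 1} from rfl]
      rw [Finset.prod_singleton, Finset.prod_pair (by norm_num : (0:ℕ) ≠ 1)]
      push_cast
      have h1 : (m : ℝ) - 1 ≠ 0 := by intro h; nlinarith
      have h2 : (m : ℝ) + 1 ≠ 0 := by intro h; nlinarith
      rw [show (m:ℝ) + 1 + 1 - 2 * 1 = (m:ℝ) from by ring,
          show (m:ℝ) + 1 - 2 * 0 = (m:ℝ) + 1 from by ring,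
          show (m:ℝ) + 1 - 2 * 1 = (m:ℝ) - 1 from by ring,
          show (m:ℝ) ^ 2 - 1 = ((m:ℝ) - 1) * ((m:ℝ) + 1) from by ring]
      field_simp
      ring
    | (s + 2) =>
      intro hm
      have IH := ih s (by omega) (by omega)
      have hrec := sum_rec m s (by omega)
      have hM : ((s : ℝ) + 4) ≤ (m : ℝ) := by exact_mod_cast (by omega : s + 4 ≤ m)
      have ecast : (((s + 2 : ℕ)) : ℝ) = (s : ℝ) + 2 := by push_cast; ring
      rw [show ((s + 2 : ℕ) : ℝ) = (s : ℝ) + 2 from ecast,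
        show s + 2 + 1 = s + 3 from rfl]
      -- product recurrences
      have hN : (∏ j ∈ Finset.Icc 1 (s + 2), ((m : ℝ) + ((s : ℝ) + 2) + 1 - 2 * (j : ℝ)))
          = ((m : ℝ) + (s : ℝ) + 1) * ((m : ℝ) - (s : ℝ) - 1) *
            (∏ j ∈ Finset.Icc 1 s, ((m : ℝ) + (s : ℝ) + 1 - 2 * (j : ℝ))) := by
        rw [Icc_prod_to_range, Icc_prod_to_range, Finset.prod_range_succ,
          Finset.prod_range_succ']
        push_cast
        rw [show (∏ i ∈ Finset.range s, ((m : ℝ) + ((s : ℝ) + 2) + 1 - 2 * ((i : ℝ) + 1 + 1)))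
            = ∏ i ∈ Finset.range s, ((m : ℝ) + (s : ℝ) + 1 - 2 * ((i : ℝ) + 1)) from
          Finset.prod_congr rfl (fun i _ => by ring)]
        ring
      have hD : (∏ j ∈ Finset.range (s + 2 + 1), ((m : ℝ) + ((s : ℝ) + 2) - 2 * (j : ℝ)))
          = ((m : ℝ) + (s : ℝ) + 2) * ((m : ℝ) - (s : ℝ) - 2) *
            (∏ j ∈ Finset.range (s + 1), ((m : ℝ) + (s : ℝ) - 2 * (j : ℝ))) := by
        rw [Finset.prod_range_succ', Finset.prod_range_succ]
        push_cast
        rw [show (∏ i ∈ Finset.range (s + 1), ((m : ℝ) + ((s : ℝ) + 2) - 2 * ((i : ℝ) + 1)))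
            = ∏ i ∈ Finset.range (s + 1), ((m : ℝ) + (s : ℝ) - 2 * (i : ℝ)) from
          Finset.prod_congr rfl (fun i _ => by ring)]
        ring
      rw [hN, hD]
      have hDs : (∏ j ∈ Finset.range (s + 1), ((m : ℝ) + (s : ℝ) - 2 * (j : ℝ))) ≠ 0 := by
        rw [Finset.prod_ne_zero_iff]
        intro j hj
        have hjs : (j : ℝ) ≤ (s : ℝ) := by
          have : j ≤ s := by simp only [Finset.mem_range] at hj; omega
          exact_mod_cast this
        intro hc
        nlinarith
      have hx2 : (m : ℝ) ^ 2 - ((s : ℝ) + 2) ^ 2 ≠ 0 := by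
        intro hc; nlinarith
      have h3 : (m : ℝ) + (s : ℝ) + 2 ≠ 0 := by intro hc; nlinarith
      have h4 : (m : ℝ) - (s : ℝ) - 2 ≠ 0 := by intro hc; nlinarith
      apply mul_left_cancel₀ hx2
      rw [hrec, IH]
      field_simp
      ring

end Stmt8Aux

open Stmt8Aux in
theorem stmt8 (m k : ℕ) (hk : 1 ≤ k) (hm : k + 1 < m) :
    S m (k + 1) 0 = (m : ℝ) *
      (∏ j ∈ Finset.Icc 1 k, ((m : ℝ) + (k : ℝ) + 1 - 2 * (j : ℝ))) /
      (∏ j ∈ Finset.range (k + 1), ((m : ℝ) + (k : ℝ) - 2 * (j : ℝ))) := by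
  have hS : S m (k + 1) 0 = ∑ r ∈ Finset.range (k + 1), cR (k : ℝ) r * (p m r)⁻¹ := by
    have hsplit : ∑ r ∈ Finset.range (k + 1), cR (k : ℝ) r * (p m r)⁻¹
        = 1 + ∑ r ∈ Finset.Icc 1 k, cR (k : ℝ) r * (p m r)⁻¹ := by
      rw [Finset.range_eq_Ico, Finset.sum_eq_sum_Ico_succ_bot (by omega : 0 < k + 1)]
      rw [cR_zero, p_zero, Finset.Ico_add_one_right_eq_Icc]
      norm_num
    rw [hsplit]
    unfold S
    simp only [Nat.add_sub_cancel]
    congr 1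
    apply Finset.sum_congr rfl
    intro r hr
    unfold cR p
    rw [← Finset.prod_inv_distrib]
    push_cast
    norm_num
  rw [hS]
  exact main m k hm
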